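/- Let S be a numerical semigroup with S ≠ ℕ. If S has no two consecutive elements among its left elements (i.e., there is no x ∈ ℕ with x ∈ S, x + 1 ∈ S and x + 1 < F(S)), then F(S) ≥ m(S) + 2·#(L(S) \ {0}) − 1, where L(S) = {s ∈ S : s < F(S)}. -/
import Mathlib


/-- A numerical semigroup: an additive submonoid of ℕ with finite complement. -/
structure NumericalSemigroup where
  carrier : Set ℕ
  zero_mem : 0 ∈ carrier
  add_mem : ∀ ⦃a b : ℕ⦄, a ∈ carrier → b ∈ carrier → a + b ∈ carrier
  cofinite : (carrierᶜ : Set ℕ).Finite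

namespace NumericalSemigroup

/-- The genus: the number of gaps. -/
noncomputable def genus (S : NumericalSemigroup) : ℕ := S.carrierᶜ.ncard

/-- The multiplicity: the smallest nonzero element. -/
noncomputable def multiplicity (S : NumericalSemigroup) : ℕ :=
  sInf {n : ℕ | n ∈ S.carrier ∧ n ≠ 0}

/-- The Frobenius number: the largest gap. -/
noncomputable def frobenius (S : NumericalSemigroup) : ℕ := sSup S.carrierᶜ

/-- The left elements: the elements of `S` smaller than the Frobenius number. -/
def leftElements (S : NumericalSemigroup) : Set ℕ :=
  {s : ℕ | s ∈ S.carrier ∧ s < S.frobenius}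

end NumericalSemigroup

/-- The gcd of a set of natural numbers: the common divisor that is divisible by
every common divisor (so `setGcd ∅ = 0`). -/
noncomputable def setGcd (A : Set ℕ) : ℕ :=
  sInf {d : ℕ | (∀ a ∈ A, d ∣ a) ∧ ∀ e : ℕ, (∀ a ∈ A, e ∣ a) → e ∣ d}

/-- The constant γ = (5 + √5)/10. -/
noncomputable def gamma : ℝ := (5 + Real.sqrt 5) / 10

/-- `S` belongs to an infinite chain in the semigroup tree. -/
def InInfiniteChain (S : NumericalSemigroup) : Prop :=
  ∃ f : ℕ → NumericalSemigroup, f 0 = S ∧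
    ∀ i : ℕ, (f (i + 1)).carrier ≠ Set.univ ∧
      (f i).carrier = (f (i + 1)).carrier ∪ {(f (i + 1)).frobenius}

theorem frobenius_ge_of_no_consecutive (S : NumericalSemigroup) (h : S.carrier ≠ Set.univ)
    (hnc : ¬ ∃ x : ℕ, x ∈ S.carrier ∧ x + 1 ∈ S.carrier ∧ x + 1 < S.frobenius) :
    S.frobenius + 1 ≥ S.multiplicity + 2 * (S.leftElements \ {0}).ncard := by
  have hne : S.carrierᶜ.Nonempty := by
    rwa [Set.nonempty_compl]
  have hbdd : BddAbove S.carrierᶜ := S.cofinite.bddAbove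
  have hF : S.frobenius ∈ S.carrierᶜ := Nat.sSup_mem hne hbdd
  have hF1 : S.frobenius + 1 ∈ S.carrier := by
    by_contra hc
    have : S.frobenius + 1 ≤ S.frobenius := le_csSup hbdd hc
    omega
  have hmle : S.multiplicity ≤ S.frobenius + 1 := Nat.sInf_le ⟨hF1, by omega⟩
  set T := S.leftElements \ {0} with hT
  have hTsub : ∀ a ∈ T, S.multiplicity ≤ a ∧ a < S.frobenius := by
    rintro a ⟨⟨ha, haF⟩, h0⟩
    exact ⟨Nat.sInf_le ⟨ha, by simpa using h0⟩, haF⟩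
  have hTfin : T.Finite := by
    apply (Set.finite_Iio S.frobenius).subset
    intro a ha
    exact (hTsub a ha).2
  have hdisj : Disjoint T ((· + 1) '' T) := by
    rw [Set.disjoint_right]
    rintro a ⟨b, hb, rfl⟩ hab
    exact hnc ⟨b, hb.1.1, hab.1.1, hab.1.2⟩
  have himg : ((· + 1) '' T).ncard = T.ncard :=
    Set.ncard_image_of_injective T (fun a b => by omega)
  have hA : (T ∪ (· + 1) '' T).ncard = 2 * T.ncard := by
    rw [Set.ncard_union_eq hdisj hTfin (hTfin.image _), himg]
    omega
  have hAsub : T ∪ (· + 1) '' T ⊆ Set.Icc S.multiplicity S.frobenius := by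
    rintro a (ha | ⟨b, hb, rfl⟩)
    · have := hTsub a ha; exact ⟨this.1, by omega⟩
    · have := hTsub b hb
      show b + 1 ∈ Set.Icc _ _
      exact ⟨by omega, by omega⟩
  have hcard : (T ∪ (· + 1) '' T).ncard ≤ (Set.Icc S.multiplicity S.frobenius).ncard :=
    Set.ncard_le_ncard hAsub (Set.finite_Icc _ _)
  have hIcc : (Set.Icc S.multiplicity S.frobenius).ncard
      = S.frobenius + 1 - S.multiplicity := by
    rw [← Finset.coe_Icc, Set.ncard_coe_finset, Nat.card_Icc]
  omega
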